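/- The per-region goodput vanishes at large rates: lim_{r→∞} G(r) = 0, where G(r) = r·∫_φ^{φ'} f(γ)·(1 − Ω(γ, r)) dγ. -/

import Mathlib

open MeasureTheory intervalIntegral Real Filter Topology

/-- Gaussian Q-function: Q(t) = (1/√(2π)) ∫_t^∞ exp(−u²/2) du. -/
noncomputable def Qfun (t : ℝ) : ℝ :=
  (Real.sqrt (2 * Real.pi))⁻¹ * ∫ u in Set.Ioi t, Real.exp (-u ^ 2 / 2)

/-- Capacity C(γ) = log(1 + P γ) (natural log). -/
noncomputable def Cap (P γ : ℝ) : ℝ := Real.log (1 + P * γ)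

/-- Channel dispersion V(γ) = 1 − 1/(1 + P γ)². -/
noncomputable def Vdisp (P γ : ℝ) : ℝ := 1 - 1 / (1 + P * γ) ^ 2

/-- Codeword error probability Ω(γ, r) = Q((C(γ) − r)·√(n/V(γ))). -/
noncomputable def Omega (n P γ r : ℝ) : ℝ :=
  Qfun ((Cap P γ - r) * Real.sqrt (n / Vdisp P γ))

/-- H(γ, r) = −(1/√(2π))·exp(−n(C(γ)−r)²/(2V(γ)))·f(γ)·√(n/V(γ)). -/
noncomputable def Hfun (n P : ℝ) (f : ℝ → ℝ) (γ r : ℝ) : ℝ :=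
  -(Real.sqrt (2 * Real.pi))⁻¹ * Real.exp (-(n * (Cap P γ - r) ^ 2) / (2 * Vdisp P γ)) *
    f γ * Real.sqrt (n / Vdisp P γ)

lemma gauss_integrable : Integrable (fun u : ℝ => Real.exp (-u ^ 2 / 2)) := by
  have := integrable_exp_neg_mul_sq (by norm_num : (0:ℝ) < 1/2)
  convert this using 2 with u
  ring_nf

lemma gauss_total : (∫ u : ℝ, Real.exp (-u ^ 2 / 2)) = Real.sqrt (2 * Real.pi) := by
  have h := integral_gaussian (1/2 : ℝ)
  rw [show (π / (1/2 : ℝ)) = 2 * π by ring] at h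
  rw [← h]
  congr 1 with u
  ring_nf

lemma sqrt_two_pi_pos : 0 < Real.sqrt (2 * Real.pi) :=
  Real.sqrt_pos.2 (by positivity)

lemma Qfun_reflect (x : ℝ) : Qfun x + Qfun (-x) = 1 := by
  unfold Qfun
  have h1 : (∫ u in Set.Ioi (-x), Real.exp (-u ^ 2 / 2))
      = ∫ u in Set.Iic x, Real.exp (-u ^ 2 / 2) := by
    have h := integral_comp_neg_Ioi (-x) (fun u : ℝ => Real.exp (-u ^ 2 / 2))
    simp only [neg_neg] at h
    rw [← h]
    congr 1 with u; ring_nf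
  have h2 := MeasureTheory.integral_add_compl (measurableSet_Iic : MeasurableSet (Set.Iic x))
    gauss_integrable
  rw [Set.compl_Iic] at h2
  rw [h1, ← mul_add, add_comm, h2, gauss_total, inv_mul_cancel₀ sqrt_two_pi_pos.ne']

lemma Qfun_anti {x y : ℝ} (hxy : x ≤ y) : Qfun y ≤ Qfun x := by
  unfold Qfun
  have h := MeasureTheory.setIntegral_mono_set gauss_integrable.integrableOn
      (Filter.Eventually.of_forall fun u => (Real.exp_pos _).le)
      (HasSubset.Subset.eventuallyLE (Set.Ioi_subset_Ioi hxy))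
  exact mul_le_mul_of_nonneg_left h (by positivity)

lemma Qfun_nonneg (x : ℝ) : 0 ≤ Qfun x := by
  unfold Qfun
  apply mul_nonneg (by positivity)
  exact MeasureTheory.setIntegral_nonneg measurableSet_Ioi fun u _ => (Real.exp_pos _).le

lemma gauss_hasDeriv (y : ℝ) : ∀ u ∈ Set.Ici y, HasDerivAt (fun u : ℝ => -Real.exp (-u ^ 2 / 2))
    (u * Real.exp (-u ^ 2 / 2)) u := by
  intro u _
  have : HasDerivAt (fun u : ℝ => -u ^ 2 / 2) (-u) u := by
    have := ((hasDerivAt_pow 2 u).neg).div_const 2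
    simpa using this.congr_deriv (by push_cast; ring)
  exact (this.exp.neg).congr_deriv (by ring)

lemma gauss_tend : Tendsto (fun u : ℝ => -Real.exp (-u ^ 2 / 2)) atTop (𝓝 0) := by
  rw [show (0:ℝ) = -0 by ring]
  apply Tendsto.neg
  apply Real.tendsto_exp_atBot.comp
  apply Filter.Tendsto.atBot_div_const two_pos
  exact tendsto_neg_atBot_iff.2 (tendsto_pow_atTop two_ne_zero)

lemma gauss_moment_integrable (y : ℝ) (hy : 0 ≤ y) :
    IntegrableOn (fun u : ℝ => u * Real.exp (-u ^ 2 / 2)) (Set.Ioi y) :=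
  integrableOn_Ioi_deriv_of_nonneg' (gauss_hasDeriv y)
    (fun u hu => mul_nonneg (le_of_lt (hy.trans_lt hu)) (Real.exp_pos _).le) gauss_tend

lemma gauss_moment (y : ℝ) (hy : 0 ≤ y) :
    (∫ u in Set.Ioi y, u * Real.exp (-u ^ 2 / 2)) = Real.exp (-y ^ 2 / 2) := by
  have h := MeasureTheory.integral_Ioi_of_hasDerivAt_of_nonneg' (gauss_hasDeriv y)
    (fun u hu => mul_nonneg (le_of_lt (hy.trans_lt hu)) (Real.exp_pos _).le) gauss_tend
  rw [h]; ring

lemma Qfun_le (y : ℝ) (hy : 1 ≤ y) : Qfun y ≤ Real.exp (-y / 2) := by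
  have h0y : (0:ℝ) ≤ y := by linarith
  have h1 : (∫ u in Set.Ioi y, Real.exp (-u ^ 2 / 2))
      ≤ ∫ u in Set.Ioi y, u * Real.exp (-u ^ 2 / 2) := by
    apply MeasureTheory.setIntegral_mono_on gauss_integrable.integrableOn
    · exact gauss_moment_integrable y h0y
    · exact measurableSet_Ioi
    · intro u hu
      nth_rewrite 1 [show Real.exp (-u ^ 2 / 2) = 1 * Real.exp (-u ^ 2 / 2) by ring]
      exact mul_le_mul_of_nonneg_right (hy.trans (le_of_lt hu)) (Real.exp_pos _).le
  have h2 : Qfun y ≤ Real.exp (-y ^ 2 / 2) := by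
    unfold Qfun
    calc (Real.sqrt (2 * Real.pi))⁻¹ * ∫ u in Set.Ioi y, Real.exp (-u ^ 2 / 2)
        ≤ 1 * Real.exp (-y ^ 2 / 2) := by
          apply mul_le_mul _ (h1.trans_eq (gauss_moment y h0y)) _ zero_le_one
          · rw [inv_le_one_iff₀]
            right
            rw [show (1:ℝ) = Real.sqrt 1 by simp]
            exact Real.sqrt_le_sqrt (by nlinarith [Real.pi_gt_three])
          · exact MeasureTheory.setIntegral_nonneg measurableSet_Ioi
              fun u _ => (Real.exp_pos _).le
      _ = Real.exp (-y ^ 2 / 2) := one_mul _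
  refine h2.trans (Real.exp_le_exp.2 (by nlinarith))


theorem goodput_tendsto_zero (n P : ℝ) (hn : 0 < n) (hP : 0 < P)
    (f : ℝ → ℝ) (hf : Continuous f) (hfpos : ∀ γ : ℝ, 0 < γ → 0 < f γ)
    (φ φ' : ℝ) (hφ : 0 < φ) (hφφ' : φ < φ') :
    Tendsto (fun r : ℝ => r * ∫ γ in φ..φ', f γ * (1 - Omega n P γ r)) atTop (𝓝 0) := by
  -- bound on f
  obtain ⟨γ0, hγ0, hM⟩ := isCompact_Icc.exists_isMaxOn (Set.nonempty_Icc.2 hφφ'.le)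
    hf.continuousOn
  set M := f γ0 with hMdef
  have hMpos : 0 < M := hfpos γ0 (hφ.trans_le hγ0.1)
  set c := Cap P φ' with hc
  set a := Real.sqrt n / 2 with ha
  have hapos : 0 < a := by positivity
  -- the dominating function
  set g : ℝ → ℝ := fun r => r * (M * (φ' - φ) * Real.exp (-(a * (r - c)))) with hg
  have hgto : Tendsto g atTop (𝓝 0) := by
    have h1 : Tendsto (fun r : ℝ => a * r) atTop atTop :=
      Filter.Tendsto.const_mul_atTop hapos tendsto_id
    have h2 : Tendsto (fun x : ℝ => x ^ 1 * Real.exp (-x)) atTop (𝓝 0) :=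
      tendsto_pow_mul_exp_neg_atTop_nhds_zero 1
    have h3 : Tendsto (fun r : ℝ => (a * r) * Real.exp (-(a * r))) atTop (𝓝 0) := by
      simpa [Function.comp_def] using h2.comp h1
    have h4 : Tendsto
        (fun r : ℝ => (M * (φ' - φ) * Real.exp (a * c) / a) * ((a * r) * Real.exp (-(a * r))))
        atTop (𝓝 0) := by
      simpa using h3.const_mul (M * (φ' - φ) * Real.exp (a * c) / a)
    apply h4.congr
    intro r
    simp only [hg]
    rw [show -(a * (r - c)) = a * c + -(a * r) by ring, Real.exp_add]
    field_simp
  -- squeeze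
  rw [tendsto_zero_iff_abs_tendsto_zero]
  apply squeeze_zero' (Filter.Eventually.of_forall fun r => abs_nonneg _)
  · filter_upwards [Filter.eventually_ge_atTop (max (c + 1 / Real.sqrt n) 0)] with r hr
    have hr0 : 0 ≤ r := le_trans (le_max_right _ _) hr
    have hrc : 1 ≤ (r - c) * Real.sqrt n := by
      have h := le_trans (le_max_left _ _) hr
      have hsn : 0 < Real.sqrt n := Real.sqrt_pos.2 hn
      have h2 : 1 / Real.sqrt n ≤ r - c := by linarith
      calc (1:ℝ) = (1 / Real.sqrt n) * Real.sqrt n := by field_simp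
        _ ≤ (r - c) * Real.sqrt n := mul_le_mul_of_nonneg_right h2 hsn.le
    have key : ∀ γ ∈ Set.uIoc φ φ',
        ‖f γ * (1 - Omega n P γ r)‖ ≤ M * Real.exp (-(a * (r - c))) := by
      intro γ hγ
      rw [Set.uIoc_of_le hφφ'.le] at hγ
      have hγpos : 0 < γ := hφ.trans hγ.1
      have h1P : 1 < 1 + P * γ := by nlinarith
      have hVpos : 0 < Vdisp P γ := by
        rw [Vdisp, sub_pos, div_lt_one (by positivity)]
        nlinarith
      have hVle : Vdisp P γ ≤ 1 := by
        rw [Vdisp]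
        have : 0 < 1 / (1 + P * γ) ^ 2 := by positivity
        linarith
      have hsq : Real.sqrt n ≤ Real.sqrt (n / Vdisp P γ) := by
        apply Real.sqrt_le_sqrt
        rw [le_div_iff₀ hVpos]
        nlinarith
      have hCap : Cap P γ ≤ c := by
        rw [hc, Cap, Cap]
        apply Real.log_le_log (by positivity)
        nlinarith [hγ.2]
      have hrc' : c ≤ r := by
        nlinarith [Real.sqrt_pos.2 hn, Real.sq_sqrt hn.le,
          mul_pos (Real.sqrt_pos.2 hn) (Real.sqrt_pos.2 hn)]
      -- rewrite 1 - Omega as Qfun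
      have homega : 1 - Omega n P γ r
          = Qfun ((r - Cap P γ) * Real.sqrt (n / Vdisp P γ)) := by
        have := Qfun_reflect ((r - Cap P γ) * Real.sqrt (n / Vdisp P γ))
        rw [Omega, show (Cap P γ - r) * Real.sqrt (n / Vdisp P γ)
          = -((r - Cap P γ) * Real.sqrt (n / Vdisp P γ)) by ring]
        linarith
      have hy : (r - c) * Real.sqrt n ≤ (r - Cap P γ) * Real.sqrt (n / Vdisp P γ) := by
        apply mul_le_mul (by linarith) hsq (Real.sqrt_nonneg _) (by linarith)
      have hQ : 1 - Omega n P γ r ≤ Real.exp (-(a * (r - c))) := by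
        rw [homega]
        calc Qfun ((r - Cap P γ) * Real.sqrt (n / Vdisp P γ))
            ≤ Qfun ((r - c) * Real.sqrt n) := Qfun_anti hy
          _ ≤ Real.exp (-((r - c) * Real.sqrt n) / 2) := Qfun_le _ hrc
          _ = Real.exp (-(a * (r - c))) := by rw [ha]; ring_nf
      have hQ0 : 0 ≤ 1 - Omega n P γ r := homega ▸ Qfun_nonneg _
      rw [Real.norm_eq_abs, abs_mul, abs_of_nonneg (hfpos γ hγpos).le, abs_of_nonneg hQ0]
      apply mul_le_mul _ hQ hQ0 hMpos.le
      exact hM ⟨hγ.1.le, hγ.2⟩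
    calc |r * ∫ γ in φ..φ', f γ * (1 - Omega n P γ r)|
        = r * ‖∫ γ in φ..φ', f γ * (1 - Omega n P γ r)‖ := by
          rw [abs_mul, abs_of_nonneg hr0]; rfl
      _ ≤ r * (M * Real.exp (-(a * (r - c))) * |φ' - φ|) := by
          apply mul_le_mul_of_nonneg_left _ hr0
          exact intervalIntegral.norm_integral_le_of_norm_le_const key
      _ = g r := by
          rw [hg, abs_of_nonneg (by linarith : (0:ℝ) ≤ φ' - φ)]
          ring
  · exact hgto
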